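/- If m : ℂ → ℂ is additive in the sense that m(c + conj(d)) = m(c) + conj(m(d)) for all c, d ∈ ℂ, multiplicative (m(cd) = m(c)m(d)), and injective with m(1) = 1, then m restricted to ℝ is a ring homomorphism ℝ → ℝ. -/

import Mathlib

/-- If `m : ℂ → ℂ` satisfies `m (c + conj d) = m c + conj (m d)`, is multiplicative,
injective and `m 1 = 1`, then `m` restricted to `ℝ` is a ring homomorphism `ℝ → ℝ`. -/
theorem stmt_1 (m : ℂ → ℂ)
    (hadd : ∀ c d : ℂ, m (c + (starRingEnd ℂ) d) = m c + (starRingEnd ℂ) (m d))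
    (hmul : ∀ c d : ℂ, m (c * d) = m c * m d)
    (hinj : Function.Injective m) (hone : m 1 = 1) :
    ∃ f : ℝ →+* ℝ, ∀ r : ℝ, m (r : ℂ) = (f r : ℂ) := by
  have h0 : m 0 = 0 := by
    have := hadd 0 0
    simp at this
    exact this
  have hconj : ∀ d : ℂ, m ((starRingEnd ℂ) d) = (starRingEnd ℂ) (m d) := by
    intro d
    have := hadd 0 d
    simpa [h0] using this
  have hadd' : ∀ c d : ℂ, m (c + d) = m c + m d := by
    intro c d
    have := hadd c ((starRingEnd ℂ) d)
    simpa [hconj] using this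
  have him : ∀ r : ℝ, (m (r : ℂ)).im = 0 := by
    intro r
    have h := hconj (r : ℂ)
    rw [Complex.conj_ofReal] at h
    have h2 := congrArg Complex.im h
    simp at h2
    linarith
  refine ⟨{ toFun := fun r => (m (r:ℂ)).re,
            map_one' := by simp [hone],
            map_mul' := by
              intro x y
              have := hmul (x:ℂ) (y:ℂ)
              rw [← Complex.ofReal_mul] at this
              have := congrArg Complex.re this
              simpa [Complex.mul_re, him] using this,
            map_zero' := by simp [h0],
            map_add' := by
              intro x y
              have := hadd' (x:ℂ) (y:ℂ)
              rw [← Complex.ofReal_add] at this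
              simpa using congrArg Complex.re this }, ?_⟩
  intro r
  apply Complex.ext
  · exact (Complex.ofReal_re _).symm
  · simp [him r]
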